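/- Let E(x) = (1/2)⟨x, Q x⟩ with Q symmetric positive definite, and consider the auxiliary system λ̇ = -Q v, v̇ = u with the Nesterov-type control u = γ_a λ - γ_b v - γ_c Q v (γ_a, γ_b, γ_c > 0 with suitable relations b γ_a = -c γ_b, γ_c = -a/c for some a, b > 0, c < 0, ab - c² > 0). Then every solution (λ(t), v(t)) converges to (0, 0) as t → ∞. -/

import Mathlib

open Matrix Filter
lemma dot_self_nonneg' {n : ℕ} (x : Fin n → ℝ) : 0 ≤ x ⬝ᵥ x :=
  Finset.sum_nonneg fun _ _ => mul_self_nonneg _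

lemma dot_quad_nonneg {n : ℕ} (x y : Fin n → ℝ) (p q : ℝ) :
    0 ≤ p^2*(x ⬝ᵥ x) + 2*p*q*(x ⬝ᵥ y) + q^2*(y ⬝ᵥ y) := by
  have h := dot_self_nonneg' (p • x + q • y)
  simp only [add_dotProduct, dotProduct_add, smul_dotProduct, dotProduct_smul,
    smul_eq_mul, dotProduct_comm y x] at h
  linarith [h]

lemma hasDerivAt_dot {n : ℕ} {f g : ℝ → Fin n → ℝ} {f' g' : Fin n → ℝ} {t : ℝ}
    (hf : HasDerivAt f f' t) (hg : HasDerivAt g g' t) :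
    HasDerivAt (fun t => f t ⬝ᵥ g t) (f' ⬝ᵥ g t + f t ⬝ᵥ g') t := by
  have h := HasDerivAt.fun_sum (u := Finset.univ)
    (fun i _ => ((hasDerivAt_pi.1 hf i).mul (hasDerivAt_pi.1 hg i)))
  simpa [dotProduct, Finset.sum_add_distrib] using h



lemma posdef_lower {n : ℕ} (Q : Matrix (Fin n) (Fin n) ℝ) (hQ : Q.PosDef) :
    ∃ μ > 0, ∀ x : Fin n → ℝ, μ * (x ⬝ᵥ x) ≤ x ⬝ᵥ Q.mulVec x := by
  rcases isEmpty_or_nonempty (Fin n) with he | hne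
  · exact ⟨1, one_pos, fun x => by simp [dotProduct]⟩
  · set f : (Fin n → ℝ) → ℝ := fun x => x ⬝ᵥ Q.mulVec x with hf
    have hfc : Continuous f :=
      continuous_id.dotProduct (continuous_const.matrix_mulVec continuous_id)
    set S : Set (Fin n → ℝ) := {x | x ⬝ᵥ x = 1} with hS
    have hScont : Continuous (fun x : Fin n → ℝ => x ⬝ᵥ x) := by
      exact continuous_id.dotProduct continuous_id
    have hclosed : IsClosed S := isClosed_eq hScont continuous_const
    have hbdd : Bornology.IsBounded S := by
      apply (Metric.isBounded_closedBall (x := (0 : Fin n → ℝ)) (r := 1)).subset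
      intro x hx
      simp only [Metric.mem_closedBall, dist_zero_right]
      rw [pi_norm_le_iff_of_nonneg zero_le_one]
      intro i
      rw [Real.norm_eq_abs, abs_le_one_iff_mul_self_le_one]
      calc x i * x i ≤ x ⬝ᵥ x := Finset.single_le_sum (f := fun j => x j * x j)
            (fun j _ => mul_self_nonneg _) (Finset.mem_univ i)
        _ = 1 := hx
    have hcompact : IsCompact S := Metric.isCompact_of_isClosed_isBounded hclosed hbdd
    have hSne : S.Nonempty := by
      refine ⟨Pi.single (Classical.arbitrary (Fin n)) 1, ?_⟩
      simp [hS, dotProduct, Pi.single_apply]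
    obtain ⟨x₀, hx₀S, hx₀min⟩ := hcompact.exists_isMinOn hSne hfc.continuousOn
    refine ⟨f x₀, ?_, ?_⟩
    · have hx₀ne : x₀ ≠ 0 := by
        intro h0
        rw [hS] at hx₀S
        simp [h0] at hx₀S
      have := hQ.dotProduct_mulVec_pos hx₀ne
      simpa [hf] using this
    · intro x
      rcases eq_or_ne x 0 with rfl | hx
      · simp
      · have hxx : 0 < x ⬝ᵥ x :=
          lt_of_le_of_ne (dot_self_nonneg' x) (Ne.symm (mt dotProduct_self_eq_zero.mp hx))
        set r := Real.sqrt (x ⬝ᵥ x) with hr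
        have hrpos : 0 < r := Real.sqrt_pos.2 hxx
        have hr2 : r ^ 2 = x ⬝ᵥ x := Real.sq_sqrt hxx.le
        have hyS : (r⁻¹ • x) ∈ S := by
          simp only [hS, Set.mem_setOf_eq, smul_dotProduct, dotProduct_smul, smul_eq_mul]
          field_simp
          nlinarith [hr2]
        have hy : f x₀ ≤ f (r⁻¹ • x) := hx₀min hyS
        have hfy : f (r⁻¹ • x) = r⁻¹ * (r⁻¹ * (x ⬝ᵥ Q.mulVec x)) := by
          simp [hf, smul_dotProduct, dotProduct_smul, mulVec_smul]
        rw [hfy] at hy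
        have h1 : f x₀ * (x ⬝ᵥ x) ≤ x ⬝ᵥ Q.mulVec x := by
          have h2 : f x₀ * r ^ 2 ≤ x ⬝ᵥ Q.mulVec x := by
            rw [pow_two]
            calc f x₀ * (r * r) ≤ (r⁻¹ * (r⁻¹ * (x ⬝ᵥ Q.mulVec x))) * (r * r) :=
                  mul_le_mul_of_nonneg_right hy (by positivity)
              _ = x ⬝ᵥ Q.mulVec x := by field_simp
          rwa [hr2] at h2
        exact h1
set_option maxHeartbeats 1000000 in
theorem nesterov_quadratic_convergence {n : ℕ}
    (Q : Matrix (Fin n) (Fin n) ℝ) (hQ : Q.PosDef)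
    (γa γb γc a b c : ℝ) (hγa : 0 < γa) (hγb : 0 < γb) (hγc : 0 < γc)
    (ha : 0 < a) (hb : 0 < b) (hc : c < 0) (habc : 0 < a * b - c ^ 2)
    (hrel1 : b * γa = -c * γb) (hrel2 : γc = -a / c)
    (l v : ℝ → (Fin n → ℝ))
    (hl : ∀ t, HasDerivAt l (-(Q.mulVec (v t))) t)
    (hv : ∀ t, HasDerivAt v (γa • l t - γb • v t - γc • Q.mulVec (v t)) t) :
    Tendsto l atTop (nhds 0) ∧ Tendsto v atTop (nhds 0) := by
  obtain ⟨μ, hμ, hμle⟩ := posdef_lower Q hQ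
  have hcne : c ≠ 0 := ne_of_lt hc
  have hrel1' : b * γa + c * γb = 0 := by linarith
  have hγcc : c * γc = -a := by rw [hrel2]; field_simp [hcne]; try ring
  -- constants
  set θ : ℝ := ((-c)/b + a/(-c))/2 with hθdef
  have hθpos : 0 < θ := by
    have h1 : 0 < -c := by linarith
    positivity
  have hacθ : 0 < a + c*θ := by
    have h : a + c*θ = (a*b - c^2)/(2*b) := by
      rw [hθdef]; field_simp [hcne, hb.ne']; ring
    rw [h]; positivity
  have hbθc : 0 < b*θ + c := by
    have h : b*θ + c = (c^2 - a*b)/(2*c) := by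
      rw [hθdef]; field_simp [hcne, hb.ne']; ring
    rw [h]
    exact div_pos_of_neg_of_neg (by nlinarith) (by nlinarith)
  set m : ℝ := min ((a + c*θ)/2) ((b*θ + c)/(2*θ)) with hmdef
  have hmpos : 0 < m := lt_min (by positivity) (by positivity)
  have hm1 : 2*m ≤ a + c*θ := by
    have h := min_le_left ((a + c*θ)/2) ((b*θ + c)/(2*θ)); rw [← hmdef] at h; linarith
  have hm2 : 2*m*θ ≤ b*θ + c := by
    have h := min_le_right ((a + c*θ)/2) ((b*θ + c)/(2*θ)); rw [← hmdef] at h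
    calc 2*m*θ = ((b*θ + c)/(2*θ))*(2*θ) - (((b*θ + c)/(2*θ)) - m)*(2*θ) := by ring
      _ ≤ ((b*θ + c)/(2*θ))*(2*θ) := by
          have h2 : 0 ≤ (((b*θ + c)/(2*θ)) - m)*(2*θ) :=
            mul_nonneg (by linarith) (by positivity)
          linarith
      _ = b*θ + c := by field_simp
  set E : ℝ := γa*(a*b - c^2)*μ with hEdef
  have hEpos : 0 < E := by positivity
  set β : ℝ := min (c^2*γa^2 / (2*(-c*γa))) (E*γa^2 / ((-c*γa)*(2*γb^2+γa^2))) with hβdef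
  have hncγa : 0 < -c*γa := mul_pos (by linarith) hγa
  have hβpos : 0 < β := lt_min (by positivity) (by positivity)
  have hβ1 : (-c*γa)*β*2 ≤ c^2*γa^2 := by
    have h := min_le_left (c^2*γa^2 / (2*(-c*γa))) (E*γa^2 / ((-c*γa)*(2*γb^2+γa^2)))
    rw [← hβdef] at h
    have h2 : β * (2*(-c*γa)) ≤ c^2*γa^2 := by
      rw [← le_div_iff₀ (by positivity)]; exact h
    calc (-c*γa)*β*2 = β * (2*(-c*γa)) := by ring
      _ ≤ c^2*γa^2 := h2
  have hβ2 : (-c*γa)*β*(2*γb^2+γa^2) ≤ E*γa^2 := by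
    have h := min_le_right (c^2*γa^2 / (2*(-c*γa))) (E*γa^2 / ((-c*γa)*(2*γb^2+γa^2)))
    rw [← hβdef] at h
    have h2 : β * ((-c*γa)*(2*γb^2+γa^2)) ≤ E*γa^2 := by
      rw [← le_div_iff₀ (by positivity)]; exact h
    calc (-c*γa)*β*(2*γb^2+γa^2) = β * ((-c*γa)*(2*γb^2+γa^2)) := by ring
      _ ≤ E*γa^2 := h2
  set A : ℝ := (a + b - c)/2 with hAdef
  have hApos : 0 < A := by rw [hAdef]; linarith
  set δ : ℝ := β / A with hδdef
  have hδpos : 0 < δ := by positivity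
  have hδA : δ * A = β := by rw [hδdef]; field_simp
  -- Lyapunov function
  set V : ℝ → ℝ := fun t => a/2*(l t ⬝ᵥ l t) + b/2*(v t ⬝ᵥ v t) + c*(l t ⬝ᵥ v t) with hVdef
  set D : ℝ → ℝ := fun t =>
      a/2 * ((-(Q.mulVec (v t))) ⬝ᵥ l t + l t ⬝ᵥ (-(Q.mulVec (v t))))
    + b/2 * ((γa • l t - γb • v t - γc • Q.mulVec (v t)) ⬝ᵥ v t
              + v t ⬝ᵥ (γa • l t - γb • v t - γc • Q.mulVec (v t)))
    + c * ((-(Q.mulVec (v t))) ⬝ᵥ v t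
              + l t ⬝ᵥ (γa • l t - γb • v t - γc • Q.mulVec (v t))) with hDdef
  have hVd : ∀ t, HasDerivAt V (D t) t := fun t =>
    (((hasDerivAt_dot (hl t) (hl t)).const_mul (a/2)).add
      ((hasDerivAt_dot (hv t) (hv t)).const_mul (b/2))).add
      ((hasDerivAt_dot (hl t) (hv t)).const_mul c)
  have key : ∀ t, D t + δ * V t ≤ 0 := by
    intro t
    set S : ℝ := l t ⬝ᵥ l t with hSdef
    set P : ℝ := l t ⬝ᵥ v t with hPdef
    set Qq : ℝ := v t ⬝ᵥ v t with hQqdef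
    set R : ℝ := v t ⬝ᵥ Q.mulVec (v t) with hRdef
    set M : ℝ := l t ⬝ᵥ Q.mulVec (v t) with hMdef
    have hS : 0 ≤ S := dot_self_nonneg' _
    have hQq : 0 ≤ Qq := dot_self_nonneg' _
    have hR : μ * Qq ≤ R := hμle (v t)
    have hw : 0 ≤ γa^2*S - 2*γa*γb*P + γb^2*Qq := by
      have h := dot_quad_nonneg (l t) (v t) γa (-γb); linarith [h]
    have hw2 : 0 ≤ γa^2*S - 4*γa*γb*P + 4*γb^2*Qq := by
      have h := dot_quad_nonneg (l t) (v t) γa (-(2*γb)); linarith [h]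
    have h11 : 0 ≤ S + 2*P + Qq := by
      have h := dot_quad_nonneg (l t) (v t) 1 1; linarith [h]
    have hid : (c*γa) * D t = c^2*(γa^2*S - 2*γa*γb*P + γb^2*Qq) + γa*(a*b - c^2)*R := by
      show (c*γa) * (_ + _ + _) = _
      simp only [neg_dotProduct, dotProduct_neg, sub_dotProduct, dotProduct_sub,
        smul_dotProduct, dotProduct_smul, smul_eq_mul]
      rw [dotProduct_comm (Q.mulVec (v t)) (l t), dotProduct_comm (Q.mulVec (v t)) (v t),
        dotProduct_comm (v t) (l t)]
      rw [← hSdef, ← hPdef, ← hQqdef, ← hRdef, ← hMdef]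
      linear_combination (-c*γa*M - γa*b*R) * hγcc + (c*γa*P - c*γb*Qq) * hrel1'
    set w : ℝ := γa^2*S - 2*γa*γb*P + γb^2*Qq with hwdef
    have step1 : γa^2*(S+Qq) ≤ 2*w + (2*γb^2+γa^2)*Qq := by rw [hwdef]; linarith [hw2]
    have hRE : E*Qq ≤ γa*(a*b-c^2)*R := by
      calc E*Qq = (γa*(a*b-c^2))*(μ*Qq) := by rw [hEdef]; ring
        _ ≤ (γa*(a*b-c^2))*R := mul_le_mul_of_nonneg_left hR (by positivity)
    have t1 : (-c*γa)*β*(γa^2*(S+Qq)) ≤ (-c*γa)*β*(2*w + (2*γb^2+γa^2)*Qq) :=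
      mul_le_mul_of_nonneg_left step1 (by positivity)
    have t2 : ((-c*γa)*β*2)*w ≤ (c^2*γa^2)*w := mul_le_mul_of_nonneg_right hβ1 hw
    have t3 : ((-c*γa)*β*(2*γb^2+γa^2))*Qq ≤ (E*γa^2)*Qq := mul_le_mul_of_nonneg_right hβ2 hQq
    have t4 : γa^2*(E*Qq) ≤ γa^2*(γa*(a*b-c^2)*R) := mul_le_mul_of_nonneg_left hRE (sq_nonneg γa)
    have big : (-c*γa)*β*(γa^2*(S+Qq)) ≤ γa^2*((c*γa)*(D t)) := by
      rw [hid]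
      linarith [t1, t2, t3, t4]
    have hN : 0 < (-c*γa)*γa^2 := by positivity
    have big' : ((-c*γa)*γa^2)*(β*(S+Qq)) ≤ ((-c*γa)*γa^2)*(-(D t)) := by linarith [big]
    have hDb : D t + β*(S + Qq) ≤ 0 := by
      have h := le_of_mul_le_mul_left big' hN
      linarith
    have hVA : V t ≤ A*(S + Qq) := by
      show a/2*S + b/2*Qq + c*P ≤ A*(S+Qq)
      rw [hAdef]
      have h12 := mul_le_mul_of_nonneg_left h11 (show (0:ℝ) ≤ -c by linarith)
      have h13 : 0 ≤ b/2*S := by positivity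
      have h14 : 0 ≤ a/2*Qq := by positivity
      linarith [h12, h13, h14]
    have hδV : δ * V t ≤ β*(S + Qq) := by
      calc δ * V t ≤ δ * (A*(S+Qq)) := mul_le_mul_of_nonneg_left hVA hδpos.le
        _ = β*(S+Qq) := by rw [← hδA]; ring
    linarith
  have hlow : ∀ t, m * ((l t ⬝ᵥ l t) + (v t ⬝ᵥ v t)) ≤ V t := by
    intro t
    set S : ℝ := l t ⬝ᵥ l t with hSdef
    set P : ℝ := l t ⬝ᵥ v t with hPdef
    set Qq : ℝ := v t ⬝ᵥ v t with hQqdef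
    have hS : 0 ≤ S := dot_self_nonneg' _
    have hQq : 0 ≤ Qq := dot_self_nonneg' _
    have hθf : 0 ≤ θ^2*S - 2*θ*P + Qq := by
      have h := dot_quad_nonneg (l t) (v t) θ (-1); linarith [h]
    show m * (S + Qq) ≤ a/2*S + b/2*Qq + c*P
    have u1 : θ*((2*m)*S) ≤ θ*((a + c*θ)*S) :=
      mul_le_mul_of_nonneg_left (mul_le_mul_of_nonneg_right hm1 hS) hθpos.le
    have u2 : (2*m*θ)*Qq ≤ (b*θ+c)*Qq := mul_le_mul_of_nonneg_right hm2 hQq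
    have u3 : 0 ≤ (-c)*(θ^2*S - 2*θ*P + Qq) := mul_nonneg (by linarith) hθf
    have main2 : (2*θ)*(m*(S+Qq)) ≤ (2*θ)*(a/2*S + b/2*Qq + c*P) := by linarith [u1, u2, u3]
    exact le_of_mul_le_mul_left main2 (by positivity)
  -- decay of W = V * exp(δ t)
  set W : ℝ → ℝ := fun t => V t * Real.exp (δ * t) with hWdef
  have hWd : ∀ t, HasDerivAt W ((D t + δ * V t) * Real.exp (δ * t)) t := by
    intro t
    have he : HasDerivAt (fun s => Real.exp (δ * s)) (Real.exp (δ * t) * δ) t := by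
      simpa [Function.comp_def] using (Real.hasDerivAt_exp (δ * t)).comp t ((hasDerivAt_id t).const_mul δ)
    have h := (hVd t).fun_mul he
    exact h.congr_deriv (by ring)
  have hanti : Antitone W :=
    antitone_of_deriv_nonpos (fun t => (hWd t).differentiableAt)
      (fun t => by
        rw [(hWd t).deriv]
        exact mul_nonpos_of_nonpos_of_nonneg (key t) (Real.exp_pos _).le)
  have hVub : ∀ t, 0 ≤ t → V t ≤ V 0 * (Real.exp (δ * t))⁻¹ := by
    intro t ht
    have h : W t ≤ W 0 := hanti ht
    rw [hWdef] at h
    simp only [mul_zero, Real.exp_zero, mul_one] at h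
    have hep : (0:ℝ) < Real.exp (δ * t) := Real.exp_pos _
    calc V t = V t * Real.exp (δ*t) * (Real.exp (δ*t))⁻¹ := by field_simp
      _ ≤ V 0 * (Real.exp (δ * t))⁻¹ := mul_le_mul_of_nonneg_right h (by positivity)
  have hexp : Tendsto (fun t => Real.exp (δ * t)) atTop atTop :=
    Real.tendsto_exp_atTop.comp (Tendsto.const_mul_atTop hδpos tendsto_id)
  have hbound : Tendsto (fun t => V 0 * (Real.exp (δ * t))⁻¹) atTop (nhds 0) := by
    have h := hexp.inv_tendsto_atTop
    simpa using h.const_mul (V 0)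
  have hXnon : ∀ t, 0 ≤ (l t ⬝ᵥ l t) + (v t ⬝ᵥ v t) := fun t =>
    add_nonneg (dot_self_nonneg' _) (dot_self_nonneg' _)
  have hX : Tendsto (fun t => (l t ⬝ᵥ l t) + (v t ⬝ᵥ v t)) atTop (nhds 0) := by
    apply tendsto_of_tendsto_of_tendsto_of_le_of_le' tendsto_const_nhds
      (show Tendsto (fun t => m⁻¹ * (V 0 * (Real.exp (δ * t))⁻¹)) atTop (nhds 0) by
        simpa using hbound.const_mul m⁻¹)
    · exact Eventually.of_forall hXnon
    · filter_upwards [eventually_ge_atTop (0:ℝ)] with t ht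
      have h1 := hlow t
      have h2 := hVub t ht
      have h3 := mul_le_mul_of_nonneg_left (h1.trans h2) (inv_nonneg.2 hmpos.le)
      rwa [inv_mul_cancel_left₀ hmpos.ne'] at h3
  have hS0 : Tendsto (fun t => l t ⬝ᵥ l t) atTop (nhds 0) :=
    tendsto_of_tendsto_of_tendsto_of_le_of_le tendsto_const_nhds hX
      (fun t => dot_self_nonneg' _) (fun t => le_add_of_nonneg_right (dot_self_nonneg' _))
  have hQ0 : Tendsto (fun t => v t ⬝ᵥ v t) atTop (nhds 0) :=
    tendsto_of_tendsto_of_tendsto_of_le_of_le tendsto_const_nhds hX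
      (fun t => dot_self_nonneg' _) (fun t => le_add_of_nonneg_left (dot_self_nonneg' _))
  have hcomp : ∀ (f : ℝ → Fin n → ℝ), Tendsto (fun t => f t ⬝ᵥ f t) atTop (nhds 0) →
      Tendsto f atTop (nhds 0) := by
    intro f hf
    rw [tendsto_pi_nhds]
    intro i
    have hsq : Tendsto (fun t => Real.sqrt (f t ⬝ᵥ f t)) atTop (nhds 0) := by
      have h := (Real.continuous_sqrt.tendsto 0).comp hf
      simpa [Function.comp_def] using h
    have hbnd : ∀ t, ‖f t i‖ ≤ Real.sqrt (f t ⬝ᵥ f t) := by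
      intro t
      rw [Real.norm_eq_abs, ← Real.sqrt_sq_eq_abs, sq]
      exact Real.sqrt_le_sqrt (Finset.single_le_sum (f := fun j => f t j * f t j)
        (fun j _ => mul_self_nonneg _) (Finset.mem_univ i))
    simpa using squeeze_zero_norm hbnd hsq
  exact ⟨hcomp l hS0, hcomp v hQ0⟩
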